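/- If a group G acts on a tree T, x ∈ G is elliptic fixing a vertex v, y ∈ G is any element with y·v ≠ v, e₊ is the initial edge of the geodesic [v, y·v], e₋ is the initial edge of [v, y⁻¹·v], and x·e₊ ∉ {e₊, e₋}, then the concatenation [y⁻¹·v, v]·[v, x·y·v] is a geodesic in T. -/
import Mathlib

open SimpleGraph

private lemma dist_smul_eq' {G V : Type*} [Group G] {T : SimpleGraph V} [MulAction G V]
    (hadj : ∀ (g : G) (a b : V), T.Adj a b → T.Adj (g • a) (g • b))
    (hconn : T.Connected) (g : G) (a b : V) :
    T.dist (g • a) (g • b) = T.dist a b := by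
  have key : ∀ (h : G) (c d : V), T.dist (h • c) (h • d) ≤ T.dist c d := by
    intro h c d
    obtain ⟨p, hp⟩ := (hconn c d).exists_walk_length_eq_dist
    have := SimpleGraph.dist_le
      (p.map (⟨fun u => h • u, fun hcd => hadj h _ _ hcd⟩ : T →g T))
    rwa [SimpleGraph.Walk.length_map, hp] at this
  refine le_antisymm (key g a b) ?_
  have := key g⁻¹ (g • a) (g • b)
  simpa using this

private lemma tree_dist_add {V : Type*} {T : SimpleGraph V} (hT : T.IsTree)
    {v a c wm r : V} (h1 : T.Adj v wm) (h2 : T.Adj v r) (hne : wm ≠ r)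
    (ha : T.dist wm a + 1 = T.dist v a) (hc : T.dist r c + 1 = T.dist v c) :
    T.dist a c = T.dist a v + T.dist v c := by
  classical
  have hconn := hT.isConnected
  obtain ⟨Pa, hPaP, hPal⟩ := hconn.exists_path_of_dist wm a
  obtain ⟨Pc, hPcP, hPcl⟩ := hconn.exists_path_of_dist r c
  have hvPa : v ∉ Pa.support := by
    intro hv
    have h3 := SimpleGraph.dist_le (Pa.dropUntil v hv)
    have h4 := Pa.length_dropUntil_le hv
    omega
  have hvPc : v ∉ Pc.support := by
    intro hv
    have h3 := SimpleGraph.dist_le (Pc.dropUntil v hv)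
    have h4 := Pc.length_dropUntil_le hv
    omega
  obtain ⟨Pac, hPacP, hPacl⟩ := hconn.exists_path_of_dist a c
  have hvac : v ∈ Pac.support := by
    by_contra hvac
    -- build a path from v to c starting with edge v-wm
    set w : T.Walk wm c := Pa.append Pac with hw
    have hvw : v ∉ w.support := by
      rw [hw, SimpleGraph.Walk.mem_support_append_iff]
      push_neg
      exact ⟨hvPa, hvac⟩
    have hvwb : v ∉ w.bypass.support := fun h => hvw (w.support_bypass_subset h)
    have hQ : (SimpleGraph.Walk.cons h1 w.bypass).IsPath :=
      (w.bypass_isPath).cons hvwb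
    have hWc : (SimpleGraph.Walk.cons h2 Pc).IsPath := hPcP.cons hvPc
    have heq : SimpleGraph.Walk.cons h1 w.bypass = SimpleGraph.Walk.cons h2 Pc :=
      ((hT.existsUnique_path v c).unique hQ hWc)
    have hsup := congrArg SimpleGraph.Walk.support heq
    rw [SimpleGraph.Walk.support_cons, SimpleGraph.Walk.support_cons,
      w.bypass.support_eq_cons, Pc.support_eq_cons] at hsup
    rw [List.cons.injEq, List.cons.injEq] at hsup
    exact hne hsup.2.1
  have h5 := SimpleGraph.dist_le (Pac.takeUntil v hvac)
  have h6 := SimpleGraph.dist_le (Pac.dropUntil v hvac)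
  have h7 := congrArg SimpleGraph.Walk.length (Pac.take_spec hvac)
  rw [SimpleGraph.Walk.length_append] at h7
  have h8 := hconn.dist_triangle (u := a) (v := v) (w := c)
  omega

/-- Let a group `G` act on a simplicial tree `T` by graph automorphisms. Suppose
`x ∈ G` is elliptic, fixing a vertex `v`, and `y ∈ G` satisfies `y • v ≠ v`. Let
`e₊ = (v, wp)` be the initial edge of the geodesic `[v, y • v]` (so `wp` is adjacent
to `v` and lies on that geodesic) and `e₋ = (v, wm)` the initial edge of
`[v, y⁻¹ • v]`. If `x • e₊ ∉ {e₊, e₋}` (i.e. `x • wp ∉ {wp, wm}`, note `x` fixes `v`),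
then the concatenation `[y⁻¹ • v, v] · [v, (x*y) • v]` is a geodesic, i.e. the
distances add. -/
theorem concat_geodesic_of_elliptic {G V : Type*} [Group G] (T : SimpleGraph V)
    (hT : T.IsTree) [MulAction G V]
    (hadj : ∀ (g : G) (a b : V), T.Adj a b → T.Adj (g • a) (g • b))
    (x y : G) (v wp wm : V)
    (hx : x • v = v) (hy : y • v ≠ v)
    (hwp : T.Adj v wp) (hwpgeo : T.dist wp (y • v) + 1 = T.dist v (y • v))
    (hwm : T.Adj v wm) (hwmgeo : T.dist wm (y⁻¹ • v) + 1 = T.dist v (y⁻¹ • v))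
    (hxe : x • wp ≠ wp ∧ x • wp ≠ wm) :
    T.dist (y⁻¹ • v) ((x * y) • v) =
      T.dist (y⁻¹ • v) v + T.dist v ((x * y) • v) := by
  have hconn := hT.isConnected
  have hr : T.Adj v (x • wp) := by
    have := hadj x v wp hwp
    rwa [hx] at this
  have hne : wm ≠ x • wp := fun h => hxe.2 h.symm
  have e1 : T.dist (x • wp) ((x * y) • v) = T.dist wp (y • v) := by
    rw [mul_smul]; exact dist_smul_eq' hadj hconn x wp (y • v)
  have e2 : T.dist v ((x * y) • v) = T.dist v (y • v) := by
    calc T.dist v ((x * y) • v) = T.dist (x • v) (x • (y • v)) := by rw [hx, mul_smul]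
    _ = T.dist v (y • v) := dist_smul_eq' hadj hconn x v (y • v)
  have hc : T.dist (x • wp) ((x * y) • v) + 1 = T.dist v ((x * y) • v) := by
    rw [e1, e2]; exact hwpgeo
  exact tree_dist_add hT hwm hr hne hwmgeo hc
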